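/- The family of homogeneous modules of a weakly digraphic homogeneous relation is weakly partitive: it contains X and all singletons, and is closed under union, intersection, and difference of overlapping members. -/
import Mathlib


/-- `H` is a homogeneous relation: for each `x`, the binary relation
`H x · ·` is an equivalence relation on the elements distinct from `x`. -/
def IsHomRel {X : Type*} (H : X → X → X → Prop) : Prop :=
  (∀ x y, y ≠ x → H x y y) ∧
  (∀ x y z, y ≠ x → z ≠ x → H x y z → H x z y) ∧
  (∀ x y z w, y ≠ x → z ≠ x → w ≠ x → H x y z → H x z w → H x y w)

/-- `M` is a homogeneous module of `H`. -/
def IsModule {X : Type*} (H : X → X → X → Prop) (M : Set X) : Prop :=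
  ∀ m ∈ M, ∀ m' ∈ M, ∀ x ∉ M, H x m m'

/-- Two sets overlap. -/
def Overlap {X : Type*} (A B : Set X) : Prop :=
  (A ∩ B).Nonempty ∧ (A \ B).Nonempty ∧ (B \ A).Nonempty

def WeaklyDigraphic {X : Type*} (H : X → X → X → Prop) : Prop :=
  ∀ x y s t : X, x ≠ y → x ≠ s → x ≠ t → y ≠ s → y ≠ t → s ≠ t →
    H s x y → H t x y → H y s x → H y t x → H x s t

theorem stmt_16 {X : Type*} [Fintype X] (H : X → X → X → Prop)
    (hH : IsHomRel H) (hwd : WeaklyDigraphic H) :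
    IsModule H (Set.univ : Set X) ∧
    (∀ x : X, IsModule H {x}) ∧
    ∀ A B : Set X, IsModule H A → IsModule H B → Overlap A B →
      IsModule H (A ∪ B) ∧ IsModule H (A ∩ B) ∧ IsModule H (A \ B) := by
  obtain ⟨hrefl, hsymm, htrans⟩ := hH
  refine ⟨?_, ?_, ?_⟩
  · intro m _ m' _ x hx; exact absurd (Set.mem_univ x) hx
  · intro x m hm m' hm' z hz
    simp only [Set.mem_singleton_iff] at hm hm' hz
    subst hm; subst hm'
    exact hrefl z m' fun h => hz h.symm
  · intro A B hA hB ⟨⟨c, hcA, hcB⟩, ⟨a, haA, haB⟩, ⟨b, hbB, hbA⟩⟩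
    refine ⟨?_, ?_, ?_⟩
    · -- union
      intro m hm m' hm' x hx
      have hxA : x ∉ A := fun h => hx (Or.inl h)
      have hxB : x ∉ B := fun h => hx (Or.inr h)
      have key : ∀ u ∈ A, ∀ v ∈ B, H x u v := by
        intro u hu v hv
        exact htrans x u c v (fun h => hxA (h ▸ hu)) (fun h => hxA (h ▸ hcA))
          (fun h => hxB (h ▸ hv)) (hA u hu c hcA x hxA) (hB c hcB v hv x hxB)
      rcases hm with hm | hm <;> rcases hm' with hm' | hm'
      · exact hA m hm m' hm' x hxA
      · exact key m hm m' hm'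
      · exact hsymm x m' m (fun h => hxA (h ▸ hm')) (fun h => hxB (h ▸ hm))
          (key m' hm' m hm)
      · exact hB m hm m' hm' x hxB
    · -- intersection
      intro m hm m' hm' x hx
      by_cases hxA : x ∈ A
      · have hxB : x ∉ B := fun h => hx ⟨hxA, h⟩
        exact hB m hm.2 m' hm'.2 x hxB
      · exact hA m hm.1 m' hm'.1 x hxA
    · -- difference
      intro m hm m' hm' x hx
      by_cases hxA : x ∈ A
      · have hxB : x ∈ B := by by_contra h; exact hx ⟨hxA, h⟩
        have hxm : x ≠ m := fun h => hm.2 (h ▸ hxB)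
        have hxm' : x ≠ m' := fun h => hm'.2 (h ▸ hxB)
        by_cases hmm : m = m'
        · subst hmm; exact hrefl x m (Ne.symm hxm)
        · have hxb : x ≠ b := fun h => hbA (h ▸ hxA)
          have hbm : b ≠ m := fun h => hbA (h ▸ hm.1)
          have hbm' : b ≠ m' := fun h => hbA (h ▸ hm'.1)
          exact hwd x b m m' hxb hxm hxm' hbm hbm' hmm
            (hB x hxB b hbB m hm.2) (hB x hxB b hbB m' hm'.2)
            (hA m hm.1 x hxA b hbA) (hA m' hm'.1 x hxA b hbA)
      · exact hA m hm.1 m' hm'.1 x hxA
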